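/- On the 13-cell diamond stencil, define the 12×9 matrix A with entries A_{jk} = ⟨φ_k⟩_{Ω_j} (j = 1,…,12, k = 1,…,9) and the vector b with b_j = ū_j − ū_0, for arbitrary real data ū_0,…,ū_{12}. Then the vector c = (c_1,…,c_9) given by c_1 = [36(ū_5−ū_4) − 5(ū_{11}−ū_{10}) − (ū_8−ū_6) − (ū_3−ū_1)]/(48Δx), c_2 = [36(ū_2−ū_7) − 5(ū_9−ū_{12}) − (ū_1−ū_6) − (ū_3−ū_8)]/(48Δy), c_3 = [76(ū_{11}−2ū_0+ū_{10}) + 19(ū_5−2ū_0+ū_4) + 17(ū_3−2ū_2+ū_1) + 17(ū_6−2ū_7+ū_8) + 32(ū_2−2ū_0+ū_7) − 8(ū_9−2ū_0+ū_{12})]/(714Δx²), c_4 = [76(ū_9−2ū_0+ū_{12}) + 19(ū_2−2ū_0+ū_7) + 17(ū_1−2ū_4+ū_6) + 17(ū_3−2ū_5+ū_8) + 32(ū_4−2ū_0+ū_5) − 8(ū_{10}−2ū_0+ū_{11})]/(714Δy²), c_5 = [(ū_3−ū_1)−(ū_8−ū_6)]/(4ΔxΔy), c_6 = [(ū_{11}−ū_{10})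 − 2(ū_5−ū_4)]/(12Δx³), c_7 = [(ū_9−ū_{12}) − 2(ū_2−ū_7)]/(12Δy³), c_8 = [(ū_3−ū_1) − 2(ū_5−ū_4) + (ū_8−ū_6)]/(4ΔxΔy²), c_9 = [(ū_1−ū_6) − 2(ū_2−ū_7) + (ū_3−ū_8)]/(4Δx²Δy) is the unique minimizer over ℝ⁹ of ‖Ac − b‖², i.e. the unique solution of the normal equations AᵀA c = Aᵀ b. -/

import Mathlib

open MeasureTheory intervalIntegral

/-- Cell average of `f` over the rectangle of size `dx × dy` centered at `(xc, yc)`. -/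
noncomputable def cellAvg (xc yc dx dy : ℝ) (f : ℝ → ℝ → ℝ) : ℝ :=
  (dx * dy)⁻¹ *
    ∫ x in (xc - dx / 2)..(xc + dx / 2),
      ∫ y in (yc - dy / 2)..(yc + dy / 2), f x y

/-- Offsets (in units of `Δx`, `Δy`) of the centers of the cells `Ω_1, …, Ω_12`
of the 13-cell diamond stencil with respect to the center `(x_0, y_0)` of `Ω_0`. -/
def off12 : Fin 12 → ℝ × ℝ :=
  ![(-1, 1), (0, 1), (1, 1), (-1, 0), (1, 0), (-1, -1), (0, -1), (1, -1),
    (0, 2), (-2, 0), (2, 0), (0, -2)]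

/-- Basis polynomials `φ_1, …, φ_9` for the cubic optimal polynomial. -/
noncomputable def phi9 (x0 y0 dx dy : ℝ) : Fin 9 → ℝ → ℝ → ℝ :=
  ![fun x _ => x - x0,
    fun _ y => y - y0,
    fun x _ => (x - x0) ^ 2 - dx ^ 2 / 12,
    fun _ y => (y - y0) ^ 2 - dy ^ 2 / 12,
    fun x y => (x - x0) * (y - y0),
    fun x _ => (x - x0) ^ 3,
    fun _ y => (y - y0) ^ 3,
    fun x y => (x - x0) * (y - y0) ^ 2,
    fun x y => (x - x0) ^ 2 * (y - y0)]



lemma int_pow_sub (a b x0 : ℝ) (n : ℕ) :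
    ∫ x in a..b, (x - x0) ^ n = ((b - x0) ^ (n + 1) - (a - x0) ^ (n + 1)) / (n + 1) := by
  rw [show (∫ x in a..b, (x - x0) ^ n) = ∫ x in a - x0..b - x0, x ^ n from
    intervalIntegral.integral_comp_sub_right (fun x => x ^ n) x0, integral_pow]

lemma avg_one (c d : ℝ) (hd : d ≠ 0) :
    d⁻¹ * ∫ _x in (c - d/2)..(c + d/2), (1:ℝ) = 1 := by
  rw [intervalIntegral.integral_const]
  field_simp
  rw [smul_eq_mul]; ring

lemma avg_c1 (c d x0 : ℝ) (hd : d ≠ 0) :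
    d⁻¹ * ∫ x in (c - d/2)..(c + d/2), (x - x0) = c - x0 := by
  have h := int_pow_sub (c - d/2) (c + d/2) x0 1
  simp only [pow_one] at h
  rw [h]; field_simp; ring

lemma avg_c2 (c d x0 : ℝ) (hd : d ≠ 0) :
    d⁻¹ * ∫ x in (c - d/2)..(c + d/2), (x - x0) ^ 2 = (c - x0) ^ 2 + d ^ 2 / 12 := by
  rw [int_pow_sub]; field_simp; ring

lemma avg_c3 (c d x0 : ℝ) (hd : d ≠ 0) :
    d⁻¹ * ∫ x in (c - d/2)..(c + d/2), (x - x0) ^ 3 = (c - x0) ^ 3 + (c - x0) * d ^ 2 / 4 := by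
  rw [int_pow_sub]; field_simp; ring

lemma avg_c2s (c d x0 e : ℝ) (hd : d ≠ 0) :
    d⁻¹ * ∫ x in (c - d/2)..(c + d/2), ((x - x0) ^ 2 - e)
      = (c - x0) ^ 2 + d ^ 2 / 12 - e := by
  rw [intervalIntegral.integral_sub
    ((by continuity : Continuous fun x : ℝ => (x - x0) ^ 2).intervalIntegrable _ _)
    (continuous_const.intervalIntegrable _ _)]
  rw [int_pow_sub, intervalIntegral.integral_const]
  field_simp; ring


lemma cellAvg_mul (xc yc dx dy : ℝ) (g h : ℝ → ℝ) :
    cellAvg xc yc dx dy (fun x y => g x * h y)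
      = (dx⁻¹ * ∫ x in (xc - dx/2)..(xc + dx/2), g x)
        * (dy⁻¹ * ∫ y in (yc - dy/2)..(yc + dy/2), h y) := by
  unfold cellAvg
  simp only [intervalIntegral.integral_const_mul, intervalIntegral.integral_mul_const]
  rw [mul_inv]; ring

lemma A_val0 (x0 y0 dx dy : ℝ) (hdx : dx ≠ 0) (hdy : dy ≠ 0) (xc yc : ℝ) :
    cellAvg xc yc dx dy (phi9 x0 y0 dx dy 0) = xc - x0 := by
  have e1 : (fun x (_ : ℝ) => x - x0) = fun x y => (x - x0) * (1 : ℝ) := by funext x y; ring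
  have e2 : (fun (_ : ℝ) y => y - y0) = fun x y => (1 : ℝ) * (y - y0) := by funext x y; ring
  have e3 : (fun x (_ : ℝ) => (x - x0) ^ 2 - dx ^ 2 / 12)
      = fun x y => ((x - x0) ^ 2 - dx ^ 2 / 12) * (1 : ℝ) := by funext x y; ring
  have e4 : (fun (_ : ℝ) y => (y - y0) ^ 2 - dy ^ 2 / 12)
      = fun x y => (1 : ℝ) * ((y - y0) ^ 2 - dy ^ 2 / 12) := by funext x y; ring
  have e6 : (fun x (_ : ℝ) => (x - x0) ^ 3) = fun x y => (x - x0) ^ 3 * (1 : ℝ) := by funext x y; ring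
  have e7 : (fun (_ : ℝ) y => (y - y0) ^ 3) = fun x y => (1 : ℝ) * (y - y0) ^ 3 := by funext x y; ring
  show cellAvg xc yc dx dy (fun x _ => x - x0) = _
  rw [e1, cellAvg_mul, avg_c1 _ _ _ hdx, avg_one _ _ hdy]; ring

lemma A_val1 (x0 y0 dx dy : ℝ) (hdx : dx ≠ 0) (hdy : dy ≠ 0) (xc yc : ℝ) :
    cellAvg xc yc dx dy (phi9 x0 y0 dx dy 1) = yc - y0 := by
  have e1 : (fun x (_ : ℝ) => x - x0) = fun x y => (x - x0) * (1 : ℝ) := by funext x y; ring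
  have e2 : (fun (_ : ℝ) y => y - y0) = fun x y => (1 : ℝ) * (y - y0) := by funext x y; ring
  have e3 : (fun x (_ : ℝ) => (x - x0) ^ 2 - dx ^ 2 / 12)
      = fun x y => ((x - x0) ^ 2 - dx ^ 2 / 12) * (1 : ℝ) := by funext x y; ring
  have e4 : (fun (_ : ℝ) y => (y - y0) ^ 2 - dy ^ 2 / 12)
      = fun x y => (1 : ℝ) * ((y - y0) ^ 2 - dy ^ 2 / 12) := by funext x y; ring
  have e6 : (fun x (_ : ℝ) => (x - x0) ^ 3) = fun x y => (x - x0) ^ 3 * (1 : ℝ) := by funext x y; ring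
  have e7 : (fun (_ : ℝ) y => (y - y0) ^ 3) = fun x y => (1 : ℝ) * (y - y0) ^ 3 := by funext x y; ring
  show cellAvg xc yc dx dy (fun _ y => y - y0) = _
  rw [e2, cellAvg_mul, avg_one _ _ hdx, avg_c1 _ _ _ hdy]; ring

lemma A_val2 (x0 y0 dx dy : ℝ) (hdx : dx ≠ 0) (hdy : dy ≠ 0) (xc yc : ℝ) :
    cellAvg xc yc dx dy (phi9 x0 y0 dx dy 2) = (xc - x0) ^ 2 := by
  have e1 : (fun x (_ : ℝ) => x - x0) = fun x y => (x - x0) * (1 : ℝ) := by funext x y; ring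
  have e2 : (fun (_ : ℝ) y => y - y0) = fun x y => (1 : ℝ) * (y - y0) := by funext x y; ring
  have e3 : (fun x (_ : ℝ) => (x - x0) ^ 2 - dx ^ 2 / 12)
      = fun x y => ((x - x0) ^ 2 - dx ^ 2 / 12) * (1 : ℝ) := by funext x y; ring
  have e4 : (fun (_ : ℝ) y => (y - y0) ^ 2 - dy ^ 2 / 12)
      = fun x y => (1 : ℝ) * ((y - y0) ^ 2 - dy ^ 2 / 12) := by funext x y; ring
  have e6 : (fun x (_ : ℝ) => (x - x0) ^ 3) = fun x y => (x - x0) ^ 3 * (1 : ℝ) := by funext x y; ring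
  have e7 : (fun (_ : ℝ) y => (y - y0) ^ 3) = fun x y => (1 : ℝ) * (y - y0) ^ 3 := by funext x y; ring
  show cellAvg xc yc dx dy (fun x _ => (x - x0) ^ 2 - dx ^ 2 / 12) = _
  rw [e3, cellAvg_mul, avg_c2s _ _ _ _ hdx, avg_one _ _ hdy]; ring

lemma A_val3 (x0 y0 dx dy : ℝ) (hdx : dx ≠ 0) (hdy : dy ≠ 0) (xc yc : ℝ) :
    cellAvg xc yc dx dy (phi9 x0 y0 dx dy 3) = (yc - y0) ^ 2 := by
  have e1 : (fun x (_ : ℝ) => x - x0) = fun x y => (x - x0) * (1 : ℝ) := by funext x y; ring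
  have e2 : (fun (_ : ℝ) y => y - y0) = fun x y => (1 : ℝ) * (y - y0) := by funext x y; ring
  have e3 : (fun x (_ : ℝ) => (x - x0) ^ 2 - dx ^ 2 / 12)
      = fun x y => ((x - x0) ^ 2 - dx ^ 2 / 12) * (1 : ℝ) := by funext x y; ring
  have e4 : (fun (_ : ℝ) y => (y - y0) ^ 2 - dy ^ 2 / 12)
      = fun x y => (1 : ℝ) * ((y - y0) ^ 2 - dy ^ 2 / 12) := by funext x y; ring
  have e6 : (fun x (_ : ℝ) => (x - x0) ^ 3) = fun x y => (x - x0) ^ 3 * (1 : ℝ) := by funext x y; ring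
  have e7 : (fun (_ : ℝ) y => (y - y0) ^ 3) = fun x y => (1 : ℝ) * (y - y0) ^ 3 := by funext x y; ring
  show cellAvg xc yc dx dy (fun _ y => (y - y0) ^ 2 - dy ^ 2 / 12) = _
  rw [e4, cellAvg_mul, avg_one _ _ hdx, avg_c2s _ _ _ _ hdy]; ring

lemma A_val4 (x0 y0 dx dy : ℝ) (hdx : dx ≠ 0) (hdy : dy ≠ 0) (xc yc : ℝ) :
    cellAvg xc yc dx dy (phi9 x0 y0 dx dy 4) = (xc - x0) * (yc - y0) := by
  have e1 : (fun x (_ : ℝ) => x - x0) = fun x y => (x - x0) * (1 : ℝ) := by funext x y; ring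
  have e2 : (fun (_ : ℝ) y => y - y0) = fun x y => (1 : ℝ) * (y - y0) := by funext x y; ring
  have e3 : (fun x (_ : ℝ) => (x - x0) ^ 2 - dx ^ 2 / 12)
      = fun x y => ((x - x0) ^ 2 - dx ^ 2 / 12) * (1 : ℝ) := by funext x y; ring
  have e4 : (fun (_ : ℝ) y => (y - y0) ^ 2 - dy ^ 2 / 12)
      = fun x y => (1 : ℝ) * ((y - y0) ^ 2 - dy ^ 2 / 12) := by funext x y; ring
  have e6 : (fun x (_ : ℝ) => (x - x0) ^ 3) = fun x y => (x - x0) ^ 3 * (1 : ℝ) := by funext x y; ring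
  have e7 : (fun (_ : ℝ) y => (y - y0) ^ 3) = fun x y => (1 : ℝ) * (y - y0) ^ 3 := by funext x y; ring
  show cellAvg xc yc dx dy (fun x y => (x - x0) * (y - y0)) = _
  rw [cellAvg_mul, avg_c1 _ _ _ hdx, avg_c1 _ _ _ hdy]

lemma A_val5 (x0 y0 dx dy : ℝ) (hdx : dx ≠ 0) (hdy : dy ≠ 0) (xc yc : ℝ) :
    cellAvg xc yc dx dy (phi9 x0 y0 dx dy 5) = (xc - x0) ^ 3 + (xc - x0) * dx ^ 2 / 4 := by
  have e1 : (fun x (_ : ℝ) => x - x0) = fun x y => (x - x0) * (1 : ℝ) := by funext x y; ring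
  have e2 : (fun (_ : ℝ) y => y - y0) = fun x y => (1 : ℝ) * (y - y0) := by funext x y; ring
  have e3 : (fun x (_ : ℝ) => (x - x0) ^ 2 - dx ^ 2 / 12)
      = fun x y => ((x - x0) ^ 2 - dx ^ 2 / 12) * (1 : ℝ) := by funext x y; ring
  have e4 : (fun (_ : ℝ) y => (y - y0) ^ 2 - dy ^ 2 / 12)
      = fun x y => (1 : ℝ) * ((y - y0) ^ 2 - dy ^ 2 / 12) := by funext x y; ring
  have e6 : (fun x (_ : ℝ) => (x - x0) ^ 3) = fun x y => (x - x0) ^ 3 * (1 : ℝ) := by funext x y; ring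
  have e7 : (fun (_ : ℝ) y => (y - y0) ^ 3) = fun x y => (1 : ℝ) * (y - y0) ^ 3 := by funext x y; ring
  show cellAvg xc yc dx dy (fun x _ => (x - x0) ^ 3) = _
  rw [e6, cellAvg_mul, avg_c3 _ _ _ hdx, avg_one _ _ hdy]; ring

lemma A_val6 (x0 y0 dx dy : ℝ) (hdx : dx ≠ 0) (hdy : dy ≠ 0) (xc yc : ℝ) :
    cellAvg xc yc dx dy (phi9 x0 y0 dx dy 6) = (yc - y0) ^ 3 + (yc - y0) * dy ^ 2 / 4 := by
  have e1 : (fun x (_ : ℝ) => x - x0) = fun x y => (x - x0) * (1 : ℝ) := by funext x y; ring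
  have e2 : (fun (_ : ℝ) y => y - y0) = fun x y => (1 : ℝ) * (y - y0) := by funext x y; ring
  have e3 : (fun x (_ : ℝ) => (x - x0) ^ 2 - dx ^ 2 / 12)
      = fun x y => ((x - x0) ^ 2 - dx ^ 2 / 12) * (1 : ℝ) := by funext x y; ring
  have e4 : (fun (_ : ℝ) y => (y - y0) ^ 2 - dy ^ 2 / 12)
      = fun x y => (1 : ℝ) * ((y - y0) ^ 2 - dy ^ 2 / 12) := by funext x y; ring
  have e6 : (fun x (_ : ℝ) => (x - x0) ^ 3) = fun x y => (x - x0) ^ 3 * (1 : ℝ) := by funext x y; ring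
  have e7 : (fun (_ : ℝ) y => (y - y0) ^ 3) = fun x y => (1 : ℝ) * (y - y0) ^ 3 := by funext x y; ring
  show cellAvg xc yc dx dy (fun _ y => (y - y0) ^ 3) = _
  rw [e7, cellAvg_mul, avg_one _ _ hdx, avg_c3 _ _ _ hdy]; ring

lemma A_val7 (x0 y0 dx dy : ℝ) (hdx : dx ≠ 0) (hdy : dy ≠ 0) (xc yc : ℝ) :
    cellAvg xc yc dx dy (phi9 x0 y0 dx dy 7) = (xc - x0) * ((yc - y0) ^ 2 + dy ^ 2 / 12) := by
  have e1 : (fun x (_ : ℝ) => x - x0) = fun x y => (x - x0) * (1 : ℝ) := by funext x y; ring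
  have e2 : (fun (_ : ℝ) y => y - y0) = fun x y => (1 : ℝ) * (y - y0) := by funext x y; ring
  have e3 : (fun x (_ : ℝ) => (x - x0) ^ 2 - dx ^ 2 / 12)
      = fun x y => ((x - x0) ^ 2 - dx ^ 2 / 12) * (1 : ℝ) := by funext x y; ring
  have e4 : (fun (_ : ℝ) y => (y - y0) ^ 2 - dy ^ 2 / 12)
      = fun x y => (1 : ℝ) * ((y - y0) ^ 2 - dy ^ 2 / 12) := by funext x y; ring
  have e6 : (fun x (_ : ℝ) => (x - x0) ^ 3) = fun x y => (x - x0) ^ 3 * (1 : ℝ) := by funext x y; ring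
  have e7 : (fun (_ : ℝ) y => (y - y0) ^ 3) = fun x y => (1 : ℝ) * (y - y0) ^ 3 := by funext x y; ring
  show cellAvg xc yc dx dy (fun x y => (x - x0) * (y - y0) ^ 2) = _
  rw [cellAvg_mul, avg_c1 _ _ _ hdx, avg_c2 _ _ _ hdy]

lemma A_val8 (x0 y0 dx dy : ℝ) (hdx : dx ≠ 0) (hdy : dy ≠ 0) (xc yc : ℝ) :
    cellAvg xc yc dx dy (phi9 x0 y0 dx dy 8) = ((xc - x0) ^ 2 + dx ^ 2 / 12) * (yc - y0) := by
  have e1 : (fun x (_ : ℝ) => x - x0) = fun x y => (x - x0) * (1 : ℝ) := by funext x y; ring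
  have e2 : (fun (_ : ℝ) y => y - y0) = fun x y => (1 : ℝ) * (y - y0) := by funext x y; ring
  have e3 : (fun x (_ : ℝ) => (x - x0) ^ 2 - dx ^ 2 / 12)
      = fun x y => ((x - x0) ^ 2 - dx ^ 2 / 12) * (1 : ℝ) := by funext x y; ring
  have e4 : (fun (_ : ℝ) y => (y - y0) ^ 2 - dy ^ 2 / 12)
      = fun x y => (1 : ℝ) * ((y - y0) ^ 2 - dy ^ 2 / 12) := by funext x y; ring
  have e6 : (fun x (_ : ℝ) => (x - x0) ^ 3) = fun x y => (x - x0) ^ 3 * (1 : ℝ) := by funext x y; ring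
  have e7 : (fun (_ : ℝ) y => (y - y0) ^ 3) = fun x y => (1 : ℝ) * (y - y0) ^ 3 := by funext x y; ring
  show cellAvg xc yc dx dy (fun x y => (x - x0) ^ 2 * (y - y0)) = _
  rw [cellAvg_mul, avg_c2 _ _ _ hdx, avg_c1 _ _ _ hdy]

noncomputable def entry9 (dx dy a b : ℝ) : Fin 9 → ℝ :=
  ![a*dx, b*dy, (a*dx)^2, (b*dy)^2, a*dx*(b*dy), (a*dx)^3 + a*dx*dx^2/4, (b*dy)^3 + b*dy*dy^2/4, a*dx*((b*dy)^2 + dy^2/12), ((a*dx)^2 + dx^2/12)*(b*dy)]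

lemma entry9_0 (dx dy a b : ℝ) : entry9 dx dy a b 0 = a*dx := rfl
lemma entry9_1 (dx dy a b : ℝ) : entry9 dx dy a b 1 = b*dy := rfl
lemma entry9_2 (dx dy a b : ℝ) : entry9 dx dy a b 2 = (a*dx)^2 := rfl
lemma entry9_3 (dx dy a b : ℝ) : entry9 dx dy a b 3 = (b*dy)^2 := rfl
lemma entry9_4 (dx dy a b : ℝ) : entry9 dx dy a b 4 = a*dx*(b*dy) := rfl
lemma entry9_5 (dx dy a b : ℝ) : entry9 dx dy a b 5 = (a*dx)^3 + a*dx*dx^2/4 := rfl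
lemma entry9_6 (dx dy a b : ℝ) : entry9 dx dy a b 6 = (b*dy)^3 + b*dy*dy^2/4 := rfl
lemma entry9_7 (dx dy a b : ℝ) : entry9 dx dy a b 7 = a*dx*((b*dy)^2 + dy^2/12) := rfl
lemma entry9_8 (dx dy a b : ℝ) : entry9 dx dy a b 8 = ((a*dx)^2 + dx^2/12)*(b*dy) := rfl

lemma cellAvg_phi9 (x0 y0 dx dy : ℝ) (hdx : dx ≠ 0) (hdy : dy ≠ 0) (a b : ℝ) (k : Fin 9) :
    cellAvg (x0 + a * dx) (y0 + b * dy) dx dy (phi9 x0 y0 dx dy k) = entry9 dx dy a b k := by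
  fin_cases k
  · refine (A_val0 x0 y0 dx dy hdx hdy _ _).trans ?_
    show _ = a*dx
    ring
  · refine (A_val1 x0 y0 dx dy hdx hdy _ _).trans ?_
    show _ = b*dy
    ring
  · refine (A_val2 x0 y0 dx dy hdx hdy _ _).trans ?_
    show _ = (a*dx)^2
    ring
  · refine (A_val3 x0 y0 dx dy hdx hdy _ _).trans ?_
    show _ = (b*dy)^2
    ring
  · refine (A_val4 x0 y0 dx dy hdx hdy _ _).trans ?_
    show _ = a*dx*(b*dy)
    ring
  · refine (A_val5 x0 y0 dx dy hdx hdy _ _).trans ?_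
    show _ = (a*dx)^3 + a*dx*dx^2/4
    ring
  · refine (A_val6 x0 y0 dx dy hdx hdy _ _).trans ?_
    show _ = (b*dy)^3 + b*dy*dy^2/4
    ring
  · refine (A_val7 x0 y0 dx dy hdx hdy _ _).trans ?_
    show _ = a*dx*((b*dy)^2 + dy^2/12)
    ring
  · refine (A_val8 x0 y0 dx dy hdx hdy _ _).trans ?_
    show _ = ((a*dx)^2 + dx^2/12)*(b*dy)
    ring

set_option maxHeartbeats 2000000 in
/-- the explicit coefficients `c_1, …, c_9` of the fourth-order CWENO
optimal polynomial are the unique minimizer of the least-squares functional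
`‖Ac − b‖²` with `A_{jk} = ⟨φ_k⟩_{Ω_j}` and `b_j = ū_j − ū_0`, `j = 1, …, 12`. -/
theorem cweno4_optimal_polynomial_least_squares
    (x0 y0 dx dy : ℝ) (hdx : 0 < dx) (hdy : 0 < dy) (u : Fin 13 → ℝ) :
    let A : Fin 12 → Fin 9 → ℝ := fun j k =>
      cellAvg (x0 + (off12 j).1 * dx) (y0 + (off12 j).2 * dy) dx dy
        (phi9 x0 y0 dx dy k)
    let b : Fin 12 → ℝ := fun j => u j.succ - u 0
    let Φ : (Fin 9 → ℝ) → ℝ := fun cc => ∑ j, (∑ k, cc k * A j k - b j) ^ 2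
    let c : Fin 9 → ℝ :=
      ![(1 / (48 * dx)) *
          (36 * (u 5 - u 4) - 5 * (u 11 - u 10) - (u 8 - u 6) - (u 3 - u 1)),
        (1 / (48 * dy)) *
          (36 * (u 2 - u 7) - 5 * (u 9 - u 12) - (u 1 - u 6) - (u 3 - u 8)),
        (1 / (714 * dx ^ 2)) *
          (76 * (u 11 - 2 * u 0 + u 10) + 19 * (u 5 - 2 * u 0 + u 4) +
            17 * (u 3 - 2 * u 2 + u 1) + 17 * (u 6 - 2 * u 7 + u 8) +
            32 * (u 2 - 2 * u 0 + u 7) - 8 * (u 9 - 2 * u 0 + u 12)),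
        (1 / (714 * dy ^ 2)) *
          (76 * (u 9 - 2 * u 0 + u 12) + 19 * (u 2 - 2 * u 0 + u 7) +
            17 * (u 1 - 2 * u 4 + u 6) + 17 * (u 3 - 2 * u 5 + u 8) +
            32 * (u 4 - 2 * u 0 + u 5) - 8 * (u 10 - 2 * u 0 + u 11)),
        (1 / (4 * dx * dy)) * ((u 3 - u 1) - (u 8 - u 6)),
        (1 / (12 * dx ^ 3)) * ((u 11 - u 10) - 2 * (u 5 - u 4)),
        (1 / (12 * dy ^ 3)) * ((u 9 - u 12) - 2 * (u 2 - u 7)),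
        (1 / (4 * dx * dy ^ 2)) * ((u 3 - u 1) - 2 * (u 5 - u 4) + (u 8 - u 6)),
        (1 / (4 * dx ^ 2 * dy)) * ((u 1 - u 6) - 2 * (u 2 - u 7) + (u 3 - u 8))]
    ∀ c' : Fin 9 → ℝ, c' ≠ c → Φ c < Φ c' := by
  intro A b Φ c c' hne
  have hdx' : dx ≠ 0 := ne_of_gt hdx
  have hdy' : dy ≠ 0 := ne_of_gt hdy
  have hA : ∀ j k, A j k = entry9 dx dy (off12 j).1 (off12 j).2 k :=
    fun j k => cellAvg_phi9 x0 y0 dx dy hdx' hdy' _ _ k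
  have hb : ∀ j, b j = u j.succ - u 0 := fun _ => rfl
  have hc : c = ![(1 / (48 * dx)) *
          (36 * (u 5 - u 4) - 5 * (u 11 - u 10) - (u 8 - u 6) - (u 3 - u 1)),
        (1 / (48 * dy)) *
          (36 * (u 2 - u 7) - 5 * (u 9 - u 12) - (u 1 - u 6) - (u 3 - u 8)),
        (1 / (714 * dx ^ 2)) *
          (76 * (u 11 - 2 * u 0 + u 10) + 19 * (u 5 - 2 * u 0 + u 4) +
            17 * (u 3 - 2 * u 2 + u 1) + 17 * (u 6 - 2 * u 7 + u 8) +
            32 * (u 2 - 2 * u 0 + u 7) - 8 * (u 9 - 2 * u 0 + u 12)),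
        (1 / (714 * dy ^ 2)) *
          (76 * (u 9 - 2 * u 0 + u 12) + 19 * (u 2 - 2 * u 0 + u 7) +
            17 * (u 1 - 2 * u 4 + u 6) + 17 * (u 3 - 2 * u 5 + u 8) +
            32 * (u 4 - 2 * u 0 + u 5) - 8 * (u 10 - 2 * u 0 + u 11)),
        (1 / (4 * dx * dy)) * ((u 3 - u 1) - (u 8 - u 6)),
        (1 / (12 * dx ^ 3)) * ((u 11 - u 10) - 2 * (u 5 - u 4)),
        (1 / (12 * dy ^ 3)) * ((u 9 - u 12) - 2 * (u 2 - u 7)),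
        (1 / (4 * dx * dy ^ 2)) * ((u 3 - u 1) - 2 * (u 5 - u 4) + (u 8 - u 6)),
        (1 / (4 * dx ^ 2 * dy)) * ((u 1 - u 6) - 2 * (u 2 - u 7) + (u 3 - u 8))] := rfl
  have hΦ : ∀ v : Fin 9 → ℝ, Φ v = ∑ j, ((∑ k, v k * A j k) - b j) ^ 2 := fun _ => rfl
  have hres0 : ((∑ k, c k * A 0 k) - b 0) = (-17/84) * u 1 + (1/42) * u 2 + (-17/84) * u 3 + (1/42) * u 4 + (1/42) * u 5 + (-17/84) * u 6 + (1/42) * u 7 + (-17/84) * u 8 + (2/21) * u 9 + (2/21) * u 10 + (2/21) * u 11 + (2/21) * u 12 + (1/3) * u 0 := by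
    simp only [hA, hb, hc, show off12 0 = ((-1:ℝ),(1:ℝ)) from rfl]
    simp [entry9_0, entry9_1, entry9_2, entry9_3, entry9_4, entry9_5, entry9_6, entry9_7, entry9_8, Fin.sum_univ_succ, Fin.succ]
    field_simp
    ring
  have hres1 : ((∑ k, c k * A 1 k) - b 1) = (1/42) * u 1 + (-169/357) * u 2 + (1/42) * u 3 + (-1/357) * u 4 + (-1/357) * u 5 + (1/42) * u 6 + (-169/357) * u 7 + (1/42) * u 8 + (38/357) * u 9 + (-4/357) * u 10 + (-4/357) * u 11 + (38/357) * u 12 + (2/3) * u 0 := by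
    simp only [hA, hb, hc, show off12 1 = ((0:ℝ),(1:ℝ)) from rfl]
    simp [entry9_0, entry9_1, entry9_2, entry9_3, entry9_4, entry9_5, entry9_6, entry9_7, entry9_8, Fin.sum_univ_succ, Fin.succ]
    field_simp
    ring
  have hres2 : ((∑ k, c k * A 2 k) - b 2) = (-17/84) * u 1 + (1/42) * u 2 + (-17/84) * u 3 + (1/42) * u 4 + (1/42) * u 5 + (-17/84) * u 6 + (1/42) * u 7 + (-17/84) * u 8 + (2/21) * u 9 + (2/21) * u 10 + (2/21) * u 11 + (2/21) * u 12 + (1/3) * u 0 := by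
    simp only [hA, hb, hc, show off12 2 = ((1:ℝ),(1:ℝ)) from rfl]
    simp [entry9_0, entry9_1, entry9_2, entry9_3, entry9_4, entry9_5, entry9_6, entry9_7, entry9_8, Fin.sum_univ_succ, Fin.succ]
    field_simp
    ring
  have hres3 : ((∑ k, c k * A 3 k) - b 3) = (1/42) * u 1 + (-1/357) * u 2 + (1/42) * u 3 + (-169/357) * u 4 + (-169/357) * u 5 + (1/42) * u 6 + (-1/357) * u 7 + (1/42) * u 8 + (-4/357) * u 9 + (38/357) * u 10 + (38/357) * u 11 + (-4/357) * u 12 + (2/3) * u 0 := by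
    simp only [hA, hb, hc, show off12 3 = ((-1:ℝ),(0:ℝ)) from rfl]
    simp [entry9_0, entry9_1, entry9_2, entry9_3, entry9_4, entry9_5, entry9_6, entry9_7, entry9_8, Fin.sum_univ_succ, Fin.succ]
    field_simp
    ring
  have hres4 : ((∑ k, c k * A 4 k) - b 4) = (1/42) * u 1 + (-1/357) * u 2 + (1/42) * u 3 + (-169/357) * u 4 + (-169/357) * u 5 + (1/42) * u 6 + (-1/357) * u 7 + (1/42) * u 8 + (-4/357) * u 9 + (38/357) * u 10 + (38/357) * u 11 + (-4/357) * u 12 + (2/3) * u 0 := by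
    simp only [hA, hb, hc, show off12 4 = ((1:ℝ),(0:ℝ)) from rfl]
    simp [entry9_0, entry9_1, entry9_2, entry9_3, entry9_4, entry9_5, entry9_6, entry9_7, entry9_8, Fin.sum_univ_succ, Fin.succ]
    field_simp
    ring
  have hres5 : ((∑ k, c k * A 5 k) - b 5) = (-17/84) * u 1 + (1/42) * u 2 + (-17/84) * u 3 + (1/42) * u 4 + (1/42) * u 5 + (-17/84) * u 6 + (1/42) * u 7 + (-17/84) * u 8 + (2/21) * u 9 + (2/21) * u 10 + (2/21) * u 11 + (2/21) * u 12 + (1/3) * u 0 := by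
    simp only [hA, hb, hc, show off12 5 = ((-1:ℝ),(-1:ℝ)) from rfl]
    simp [entry9_0, entry9_1, entry9_2, entry9_3, entry9_4, entry9_5, entry9_6, entry9_7, entry9_8, Fin.sum_univ_succ, Fin.succ]
    field_simp
    ring
  have hres6 : ((∑ k, c k * A 6 k) - b 6) = (1/42) * u 1 + (-169/357) * u 2 + (1/42) * u 3 + (-1/357) * u 4 + (-1/357) * u 5 + (1/42) * u 6 + (-169/357) * u 7 + (1/42) * u 8 + (38/357) * u 9 + (-4/357) * u 10 + (-4/357) * u 11 + (38/357) * u 12 + (2/3) * u 0 := by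
    simp only [hA, hb, hc, show off12 6 = ((0:ℝ),(-1:ℝ)) from rfl]
    simp [entry9_0, entry9_1, entry9_2, entry9_3, entry9_4, entry9_5, entry9_6, entry9_7, entry9_8, Fin.sum_univ_succ, Fin.succ]
    field_simp
    ring
  have hres7 : ((∑ k, c k * A 7 k) - b 7) = (-17/84) * u 1 + (1/42) * u 2 + (-17/84) * u 3 + (1/42) * u 4 + (1/42) * u 5 + (-17/84) * u 6 + (1/42) * u 7 + (-17/84) * u 8 + (2/21) * u 9 + (2/21) * u 10 + (2/21) * u 11 + (2/21) * u 12 + (1/3) * u 0 := by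
    simp only [hA, hb, hc, show off12 7 = ((1:ℝ),(-1:ℝ)) from rfl]
    simp [entry9_0, entry9_1, entry9_2, entry9_3, entry9_4, entry9_5, entry9_6, entry9_7, entry9_8, Fin.sum_univ_succ, Fin.succ]
    field_simp
    ring
  have hres8 : ((∑ k, c k * A 8 k) - b 8) = (2/21) * u 1 + (38/357) * u 2 + (2/21) * u 3 + (-4/357) * u 4 + (-4/357) * u 5 + (2/21) * u 6 + (38/357) * u 7 + (2/21) * u 8 + (-53/714) * u 9 + (-16/357) * u 10 + (-16/357) * u 11 + (-53/714) * u 12 + (-1/3) * u 0 := by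
    simp only [hA, hb, hc, show off12 8 = ((0:ℝ),(2:ℝ)) from rfl]
    simp [entry9_0, entry9_1, entry9_2, entry9_3, entry9_4, entry9_5, entry9_6, entry9_7, entry9_8, Fin.sum_univ_succ, Fin.succ]
    field_simp
    ring
  have hres9 : ((∑ k, c k * A 9 k) - b 9) = (2/21) * u 1 + (-4/357) * u 2 + (2/21) * u 3 + (38/357) * u 4 + (38/357) * u 5 + (2/21) * u 6 + (-4/357) * u 7 + (2/21) * u 8 + (-16/357) * u 9 + (-53/714) * u 10 + (-53/714) * u 11 + (-16/357) * u 12 + (-1/3) * u 0 := by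
    simp only [hA, hb, hc, show off12 9 = ((-2:ℝ),(0:ℝ)) from rfl]
    simp [entry9_0, entry9_1, entry9_2, entry9_3, entry9_4, entry9_5, entry9_6, entry9_7, entry9_8, Fin.sum_univ_succ, Fin.succ]
    field_simp
    ring
  have hres10 : ((∑ k, c k * A 10 k) - b 10) = (2/21) * u 1 + (-4/357) * u 2 + (2/21) * u 3 + (38/357) * u 4 + (38/357) * u 5 + (2/21) * u 6 + (-4/357) * u 7 + (2/21) * u 8 + (-16/357) * u 9 + (-53/714) * u 10 + (-53/714) * u 11 + (-16/357) * u 12 + (-1/3) * u 0 := by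
    simp only [hA, hb, hc, show off12 10 = ((2:ℝ),(0:ℝ)) from rfl]
    simp [entry9_0, entry9_1, entry9_2, entry9_3, entry9_4, entry9_5, entry9_6, entry9_7, entry9_8, Fin.sum_univ_succ, Fin.succ]
    field_simp
    ring
  have hres11 : ((∑ k, c k * A 11 k) - b 11) = (2/21) * u 1 + (38/357) * u 2 + (2/21) * u 3 + (-4/357) * u 4 + (-4/357) * u 5 + (2/21) * u 6 + (38/357) * u 7 + (2/21) * u 8 + (-53/714) * u 9 + (-16/357) * u 10 + (-16/357) * u 11 + (-53/714) * u 12 + (-1/3) * u 0 := by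
    simp only [hA, hb, hc, show off12 11 = ((0:ℝ),(-2:ℝ)) from rfl]
    simp [entry9_0, entry9_1, entry9_2, entry9_3, entry9_4, entry9_5, entry9_6, entry9_7, entry9_8, Fin.sum_univ_succ, Fin.succ]
    field_simp
    ring
  have hres : ∀ j, ((∑ k, c k * A j k) - b j) =
      (![(-17/84) * u 1 + (1/42) * u 2 + (-17/84) * u 3 + (1/42) * u 4 + (1/42) * u 5 + (-17/84) * u 6 + (1/42) * u 7 + (-17/84) * u 8 + (2/21) * u 9 + (2/21) * u 10 + (2/21) * u 11 + (2/21) * u 12 + (1/3) * u 0,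
        (1/42) * u 1 + (-169/357) * u 2 + (1/42) * u 3 + (-1/357) * u 4 + (-1/357) * u 5 + (1/42) * u 6 + (-169/357) * u 7 + (1/42) * u 8 + (38/357) * u 9 + (-4/357) * u 10 + (-4/357) * u 11 + (38/357) * u 12 + (2/3) * u 0,
        (-17/84) * u 1 + (1/42) * u 2 + (-17/84) * u 3 + (1/42) * u 4 + (1/42) * u 5 + (-17/84) * u 6 + (1/42) * u 7 + (-17/84) * u 8 + (2/21) * u 9 + (2/21) * u 10 + (2/21) * u 11 + (2/21) * u 12 + (1/3) * u 0,
        (1/42) * u 1 + (-1/357) * u 2 + (1/42) * u 3 + (-169/357) * u 4 + (-169/357) * u 5 + (1/42) * u 6 + (-1/357) * u 7 + (1/42) * u 8 + (-4/357) * u 9 + (38/357) * u 10 + (38/357) * u 11 + (-4/357) * u 12 + (2/3) * u 0,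
        (1/42) * u 1 + (-1/357) * u 2 + (1/42) * u 3 + (-169/357) * u 4 + (-169/357) * u 5 + (1/42) * u 6 + (-1/357) * u 7 + (1/42) * u 8 + (-4/357) * u 9 + (38/357) * u 10 + (38/357) * u 11 + (-4/357) * u 12 + (2/3) * u 0,
        (-17/84) * u 1 + (1/42) * u 2 + (-17/84) * u 3 + (1/42) * u 4 + (1/42) * u 5 + (-17/84) * u 6 + (1/42) * u 7 + (-17/84) * u 8 + (2/21) * u 9 + (2/21) * u 10 + (2/21) * u 11 + (2/21) * u 12 + (1/3) * u 0,
        (1/42) * u 1 + (-169/357) * u 2 + (1/42) * u 3 + (-1/357) * u 4 + (-1/357) * u 5 + (1/42) * u 6 + (-169/357) * u 7 + (1/42) * u 8 + (38/357) * u 9 + (-4/357) * u 10 + (-4/357) * u 11 + (38/357) * u 12 + (2/3) * u 0,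
        (-17/84) * u 1 + (1/42) * u 2 + (-17/84) * u 3 + (1/42) * u 4 + (1/42) * u 5 + (-17/84) * u 6 + (1/42) * u 7 + (-17/84) * u 8 + (2/21) * u 9 + (2/21) * u 10 + (2/21) * u 11 + (2/21) * u 12 + (1/3) * u 0,
        (2/21) * u 1 + (38/357) * u 2 + (2/21) * u 3 + (-4/357) * u 4 + (-4/357) * u 5 + (2/21) * u 6 + (38/357) * u 7 + (2/21) * u 8 + (-53/714) * u 9 + (-16/357) * u 10 + (-16/357) * u 11 + (-53/714) * u 12 + (-1/3) * u 0,
        (2/21) * u 1 + (-4/357) * u 2 + (2/21) * u 3 + (38/357) * u 4 + (38/357) * u 5 + (2/21) * u 6 + (-4/357) * u 7 + (2/21) * u 8 + (-16/357) * u 9 + (-53/714) * u 10 + (-53/714) * u 11 + (-16/357) * u 12 + (-1/3) * u 0,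
        (2/21) * u 1 + (-4/357) * u 2 + (2/21) * u 3 + (38/357) * u 4 + (38/357) * u 5 + (2/21) * u 6 + (-4/357) * u 7 + (2/21) * u 8 + (-16/357) * u 9 + (-53/714) * u 10 + (-53/714) * u 11 + (-16/357) * u 12 + (-1/3) * u 0,
        (2/21) * u 1 + (38/357) * u 2 + (2/21) * u 3 + (-4/357) * u 4 + (-4/357) * u 5 + (2/21) * u 6 + (38/357) * u 7 + (2/21) * u 8 + (-53/714) * u 9 + (-16/357) * u 10 + (-16/357) * u 11 + (-53/714) * u 12 + (-1/3) * u 0] : Fin 12 → ℝ) j := by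
    intro j
    fin_cases j
    exacts [hres0, hres1, hres2, hres3, hres4, hres5, hres6, hres7, hres8, hres9, hres10, hres11]
  have hN0 : (∑ j, ((∑ k, c k * A j k) - b j) * A j 0) = 0 := by
    simp only [hres]
    simp only [hA]
    simp [entry9_0, entry9_1, entry9_2, entry9_3, entry9_4, entry9_5, entry9_6, entry9_7, entry9_8, off12, Fin.sum_univ_succ, Fin.succ]
    try ring
  have hN1 : (∑ j, ((∑ k, c k * A j k) - b j) * A j 1) = 0 := by
    simp only [hres]
    simp only [hA]
    simp [entry9_0, entry9_1, entry9_2, entry9_3, entry9_4, entry9_5, entry9_6, entry9_7, entry9_8, off12, Fin.sum_univ_succ, Fin.succ]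
    try ring
  have hN2 : (∑ j, ((∑ k, c k * A j k) - b j) * A j 2) = 0 := by
    simp only [hres]
    simp only [hA]
    simp [entry9_0, entry9_1, entry9_2, entry9_3, entry9_4, entry9_5, entry9_6, entry9_7, entry9_8, off12, Fin.sum_univ_succ, Fin.succ]
    try ring
  have hN3 : (∑ j, ((∑ k, c k * A j k) - b j) * A j 3) = 0 := by
    simp only [hres]
    simp only [hA]
    simp [entry9_0, entry9_1, entry9_2, entry9_3, entry9_4, entry9_5, entry9_6, entry9_7, entry9_8, off12, Fin.sum_univ_succ, Fin.succ]
    try ring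
  have hN4 : (∑ j, ((∑ k, c k * A j k) - b j) * A j 4) = 0 := by
    simp only [hres]
    simp only [hA]
    simp [entry9_0, entry9_1, entry9_2, entry9_3, entry9_4, entry9_5, entry9_6, entry9_7, entry9_8, off12, Fin.sum_univ_succ, Fin.succ]
    try ring
  have hN5 : (∑ j, ((∑ k, c k * A j k) - b j) * A j 5) = 0 := by
    simp only [hres]
    simp only [hA]
    simp [entry9_0, entry9_1, entry9_2, entry9_3, entry9_4, entry9_5, entry9_6, entry9_7, entry9_8, off12, Fin.sum_univ_succ, Fin.succ]
    try ring
  have hN6 : (∑ j, ((∑ k, c k * A j k) - b j) * A j 6) = 0 := by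
    simp only [hres]
    simp only [hA]
    simp [entry9_0, entry9_1, entry9_2, entry9_3, entry9_4, entry9_5, entry9_6, entry9_7, entry9_8, off12, Fin.sum_univ_succ, Fin.succ]
    try ring
  have hN7 : (∑ j, ((∑ k, c k * A j k) - b j) * A j 7) = 0 := by
    simp only [hres]
    simp only [hA]
    simp [entry9_0, entry9_1, entry9_2, entry9_3, entry9_4, entry9_5, entry9_6, entry9_7, entry9_8, off12, Fin.sum_univ_succ, Fin.succ]
    try ring
  have hN8 : (∑ j, ((∑ k, c k * A j k) - b j) * A j 8) = 0 := by
    simp only [hres]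
    simp only [hA]
    simp [entry9_0, entry9_1, entry9_2, entry9_3, entry9_4, entry9_5, entry9_6, entry9_7, entry9_8, off12, Fin.sum_univ_succ, Fin.succ]
    try ring
  have hNormal : ∀ kk, (∑ j, ((∑ k, c k * A j k) - b j) * A j kk) = 0 := by
    intro kk
    fin_cases kk
    exacts [hN0, hN1, hN2, hN3, hN4, hN5, hN6, hN7, hN8]
  have hinj : (∀ j, (∑ k, (c' k - c k) * A j k) = 0) → c' = c := by
    intro h
    have h0 := h 0
    have h1 := h 1
    have h2 := h 2
    have h3 := h 3
    have h4 := h 4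
    have h5 := h 5
    have h6 := h 6
    have h7 := h 7
    have h8 := h 8
    have h9 := h 9
    have h10 := h 10
    have h11 := h 11
    simp only [hA, show off12 0 = ((-1:ℝ),(1:ℝ)) from rfl, show off12 1 = ((0:ℝ),(1:ℝ)) from rfl, show off12 2 = ((1:ℝ),(1:ℝ)) from rfl, show off12 3 = ((-1:ℝ),(0:ℝ)) from rfl, show off12 4 = ((1:ℝ),(0:ℝ)) from rfl, show off12 5 = ((-1:ℝ),(-1:ℝ)) from rfl, show off12 6 = ((0:ℝ),(-1:ℝ)) from rfl, show off12 7 = ((1:ℝ),(-1:ℝ)) from rfl, show off12 8 = ((0:ℝ),(2:ℝ)) from rfl, show off12 9 = ((-2:ℝ),(0:ℝ)) from rfl, show off12 10 = ((2:ℝ),(0:ℝ)) from rfl, show off12 11 = ((0:ℝ),(-2:ℝ)) from rfl] at h0 h1 h2 h3 h4 h5 h6 h7 h8 h9 h10 h11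
    simp [entry9_0, entry9_1, entry9_2, entry9_3, entry9_4, entry9_5, entry9_6, entry9_7, entry9_8, Fin.sum_univ_succ, Fin.succ] at h0 h1 h2 h3 h4 h5 h6 h7 h8 h9 h10 h11
    funext k
    fin_cases k
    · have e : dx * (c' 0 - c 0) = 0 := by
        linear_combination (1/48) * h0 + (-1/48) * h2 + (-3/4) * h3 + (3/4) * h4 + (1/48) * h5 + (-1/48) * h7 + (5/48) * h9 + (-5/48) * h10
      exact sub_eq_zero.mp ((mul_eq_zero.mp e).resolve_left (by positivity))
    · have e : dy * (c' 1 - c 1) = 0 := by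
        linear_combination (-1/48) * h0 + (3/4) * h1 + (-1/48) * h2 + (1/48) * h5 + (-3/4) * h6 + (1/48) * h7 + (-5/48) * h8 + (5/48) * h11
      exact sub_eq_zero.mp ((mul_eq_zero.mp e).resolve_left (by positivity))
    · have e : dx^2 * (c' 2 - c 2) = 0 := by
        linear_combination (1/42) * h0 + (-1/357) * h1 + (1/42) * h2 + (19/714) * h3 + (19/714) * h4 + (1/42) * h5 + (-1/357) * h6 + (1/42) * h7 + (-4/357) * h8 + (38/357) * h9 + (38/357) * h10 + (-4/357) * h11
      exact sub_eq_zero.mp ((mul_eq_zero.mp e).resolve_left (by positivity))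
    · have e : dy^2 * (c' 3 - c 3) = 0 := by
        linear_combination (1/42) * h0 + (19/714) * h1 + (1/42) * h2 + (-1/357) * h3 + (-1/357) * h4 + (1/42) * h5 + (19/714) * h6 + (1/42) * h7 + (38/357) * h8 + (-4/357) * h9 + (-4/357) * h10 + (38/357) * h11
      exact sub_eq_zero.mp ((mul_eq_zero.mp e).resolve_left (by positivity))
    · have e : dx*dy * (c' 4 - c 4) = 0 := by
        linear_combination (-1/4) * h0 + (1/4) * h2 + (1/4) * h5 + (-1/4) * h7
      exact sub_eq_zero.mp ((mul_eq_zero.mp e).resolve_left (by positivity))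
    · have e : dx^3 * (c' 5 - c 5) = 0 := by
        linear_combination (1/6) * h3 + (-1/6) * h4 + (-1/12) * h9 + (1/12) * h10
      exact sub_eq_zero.mp ((mul_eq_zero.mp e).resolve_left (by positivity))
    · have e : dy^3 * (c' 6 - c 6) = 0 := by
        linear_combination (-1/6) * h1 + (1/6) * h6 + (1/12) * h8 + (-1/12) * h11
      exact sub_eq_zero.mp ((mul_eq_zero.mp e).resolve_left (by positivity))
    · have e : dx*dy^2 * (c' 7 - c 7) = 0 := by
        linear_combination (-1/4) * h0 + (1/4) * h2 + (1/2) * h3 + (-1/2) * h4 + (-1/4) * h5 + (1/4) * h7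
      exact sub_eq_zero.mp ((mul_eq_zero.mp e).resolve_left (by positivity))
    · have e : dx^2*dy * (c' 8 - c 8) = 0 := by
        linear_combination (1/4) * h0 + (-1/2) * h1 + (1/4) * h2 + (-1/4) * h5 + (1/2) * h6 + (-1/4) * h7
      exact sub_eq_zero.mp ((mul_eq_zero.mp e).resolve_left (by positivity))
  have hcross : ∑ j, ((∑ k, c k * A j k) - b j) * (∑ k, (c' k - c k) * A j k) = 0 := by
    calc ∑ j, ((∑ k, c k * A j k) - b j) * (∑ k, (c' k - c k) * A j k)
        = ∑ j, ∑ k, (c' k - c k) * ((((∑ m, c m * A j m) - b j)) * A j k) := by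
          refine Finset.sum_congr rfl fun j _ => ?_
          rw [Finset.mul_sum]
          exact Finset.sum_congr rfl fun k _ => by ring
      _ = ∑ k, ∑ j, (c' k - c k) * ((((∑ m, c m * A j m) - b j)) * A j k) :=
          Finset.sum_comm
      _ = ∑ k : Fin 9, (c' k - c k) * ∑ j, ((∑ m, c m * A j m) - b j) * A j k := by
          refine Finset.sum_congr rfl fun k _ => ?_
          rw [Finset.mul_sum]
      _ = 0 := Finset.sum_eq_zero fun k _ => by rw [hNormal k, mul_zero]
  have hkey : Φ c' = Φ c + ∑ j, (∑ k, (c' k - c k) * A j k) ^ 2 := by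
    have h1 : ∀ j, (∑ k, c' k * A j k) - b j
        = ((∑ k, c k * A j k) - b j) + ∑ k, (c' k - c k) * A j k := by
      intro j
      have h2 : ∑ k, c k * A j k + ∑ k, (c' k - c k) * A j k = ∑ k, c' k * A j k := by
        rw [← Finset.sum_add_distrib]
        exact Finset.sum_congr rfl fun k _ => by ring
      linarith
    calc Φ c' = ∑ j, (((∑ k, c k * A j k) - b j) + ∑ k, (c' k - c k) * A j k) ^ 2 := by
          rw [hΦ]
          exact Finset.sum_congr rfl fun j _ => by rw [h1 j]
      _ = ∑ j, ((((∑ k, c k * A j k) - b j)) ^ 2 +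
            (2 * ((((∑ k, c k * A j k) - b j)) * (∑ k, (c' k - c k) * A j k)) +
              (∑ k, (c' k - c k) * A j k) ^ 2)) :=
          Finset.sum_congr rfl fun j _ => by ring
      _ = Φ c + (2 * (∑ j, (((∑ k, c k * A j k) - b j)) * (∑ k, (c' k - c k) * A j k)) +
            ∑ j, (∑ k, (c' k - c k) * A j k) ^ 2) := by
          rw [Finset.sum_add_distrib, Finset.sum_add_distrib, ← Finset.mul_sum, hΦ]
      _ = Φ c + ∑ j, (∑ k, (c' k - c k) * A j k) ^ 2 := by rw [hcross]; ring
  have hex : ∃ j, (∑ k, (c' k - c k) * A j k) ≠ 0 := by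
    by_contra hco
    push_neg at hco
    exact hne (hinj hco)
  obtain ⟨j0, hj0⟩ := hex
  have hpos : 0 < ∑ j, (∑ k, (c' k - c k) * A j k) ^ 2 :=
    Finset.sum_pos' (fun j _ => sq_nonneg _)
      ⟨j0, Finset.mem_univ _, lt_of_le_of_ne (sq_nonneg _) (Ne.symm (pow_ne_zero 2 hj0))⟩
  rw [hkey]
  linarith
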